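/- Let ℓ₁, ℓ₂, ℓ₃ be three pairwise disjoint lines in PG(3,F) and let Q be the unique hyperbolic quadric containing them. Every plane of PG(3,F) that is not tangent to Q meets ℓ₁, ℓ₂, ℓ₃ in three non-collinear points. -/

import Mathlib

open Module Submodule LinearMap

section aux
variable {F : Type*} [Field F] (B : LinearMap.BilinForm F (Fin 4 → F))

lemma aux_ker_finrank (φ : (Fin 4 → F) →ₗ[F] F) (hφ : φ ≠ 0) :
    Module.finrank F (LinearMap.ker φ) = 3 := by
  have h := LinearMap.finrank_range_add_finrank_ker φ
  rw [Module.finrank_fin_fun] at h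
  have hr : Module.finrank F (LinearMap.range φ) = 1 := by
    obtain ⟨v, hv⟩ : ∃ v, φ v ≠ 0 := by
      by_contra h'
      push_neg at h'
      exact hφ (LinearMap.ext h')
    have htop : LinearMap.range φ = ⊤ := by
      rw [eq_top_iff]
      intro c _
      have : c = (c / φ v) • φ v := by rw [smul_eq_mul]; field_simp
      rw [this]
      exact Submodule.smul_mem _ _ (LinearMap.mem_range_self φ v)
    rw [htop, finrank_top, Module.finrank_self]
  omega

end aux

/-- Three pairwise skew lines in `PG(3,F)` lie on a (hyperbolic) quadric `Q`, given by a
symmetric nondegenerate bilinear form `B` (quadric = isotropic vectors of `B`).  Every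
plane that is not a tangent plane of `Q` meets the three lines in three non-collinear
points. -/
theorem plane_not_tangent_meets_noncollinear (F : Type*) [Field F]
    (B : LinearMap.BilinForm F (Fin 4 → F))
    (hBsymm : ∀ v w, B v w = B w v) (hBnd : B.Nondegenerate)
    (ℓ₁ ℓ₂ ℓ₃ : Submodule F (Fin 4 → F))
    (h₁ : Module.finrank F ℓ₁ = 2) (h₂ : Module.finrank F ℓ₂ = 2)
    (h₃ : Module.finrank F ℓ₃ = 2)
    (h12 : ℓ₁ ⊓ ℓ₂ = ⊥) (h13 : ℓ₁ ⊓ ℓ₃ = ⊥) (h23 : ℓ₂ ⊓ ℓ₃ = ⊥)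
    (hq₁ : ∀ v ∈ ℓ₁, B v v = 0) (hq₂ : ∀ v ∈ ℓ₂, B v v = 0) (hq₃ : ∀ v ∈ ℓ₃, B v v = 0)
    (Pl : Submodule F (Fin 4 → F)) (hPl : Module.finrank F Pl = 3)
    (htangent : ¬ ∃ v : Fin 4 → F, v ≠ 0 ∧ B v v = 0 ∧ Pl = LinearMap.ker (B v)) :
    Module.finrank F ((Pl ⊓ ℓ₁) ⊔ (Pl ⊓ ℓ₂) ⊔ (Pl ⊓ ℓ₃) : Submodule F (Fin 4 → F)) = 3 := by
  have hV : Module.finrank F (Fin 4 → F) = 4 := by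
    simpa using (Module.finrank_fin_fun F (n := 4))
  have hRefl : B.IsRefl := fun x y h => by rw [hBsymm]; exact h
  -- the pole w of the plane Pl
  have hWrank : Module.finrank F (B.orthogonal Pl) = 1 := by
    rw [LinearMap.BilinForm.finrank_orthogonal hBnd, hV, hPl]
  obtain ⟨w, hwW, hw0⟩ : ∃ w ∈ B.orthogonal Pl, w ≠ 0 := by
    have : 0 < Module.rank F (B.orthogonal Pl) := by
      rw [← finrank_eq_rank, hWrank]; norm_num
    exact exists_mem_ne_zero_of_rank_pos this
  have hBw : (B w : (Fin 4 → F) →ₗ[F] F) ≠ 0 := by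
    intro h
    exact hw0 (hBnd.1 w (fun n => by rw [h]; rfl))
  have hPlw : Pl = LinearMap.ker (B w) := by
    have hle : Pl ≤ LinearMap.ker (B w) := by
      intro v hv
      rw [LinearMap.mem_ker, hBsymm]
      exact hwW v hv
    exact Submodule.eq_of_le_of_finrank_eq hle (by rw [hPl, aux_ker_finrank _ hBw])
  have hww : B w w ≠ 0 := fun h => htangent ⟨w, hw0, h, hPlw⟩
  -- ℓ₁ ⊔ ℓ₂ = ⊤ and char ≠ 2
  have hsup12 : ℓ₁ ⊔ ℓ₂ = ⊤ := by
    apply Submodule.eq_top_of_finrank_eq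
    have h5 := Submodule.finrank_sup_add_finrank_inf_eq ℓ₁ ℓ₂
    rw [h12, finrank_bot, h₁, h₂] at h5
    rw [hV]
    omega
  have h2 : (2 : F) ≠ 0 := by
    intro h2
    apply hww
    obtain ⟨a, ha, b, hb, hab⟩ := Submodule.mem_sup.mp (hsup12 ▸ Submodule.mem_top :
      w ∈ ℓ₁ ⊔ ℓ₂)
    rw [← hab]
    have : B (a + b) (a + b) = B a a + B b b + 2 * B a b := by
      simp [map_add, hBsymm b a]; ring
    rw [this, hq₁ a ha, hq₂ b hb, h2]; ring
  -- isotropic subspaces are totally orthogonal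
  have horth : ∀ (ℓ : Submodule F (Fin 4 → F)), (∀ v ∈ ℓ, B v v = 0) →
      ∀ a ∈ ℓ, ∀ b ∈ ℓ, B a b = 0 := by
    intro ℓ hq a ha b hb
    have h0 : B (a + b) (a + b) = 0 := hq _ (Submodule.add_mem ℓ ha hb)
    have hexp : B (a + b) (a + b) = B a a + B b b + 2 * B a b := by
      simp [map_add, hBsymm b a]; ring
    rw [hexp, hq a ha, hq b hb, zero_add, zero_add] at h0
    exact (mul_eq_zero.mp h0).resolve_left h2
  -- no line ℓᵢ is contained in Pl
  have hnotle : ∀ (ℓ : Submodule F (Fin 4 → F)), Module.finrank F ℓ = 2 →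
      (∀ v ∈ ℓ, B v v = 0) → ¬ ℓ ≤ Pl := by
    intro ℓ hdim hq hle
    apply hww
    have hortho : ℓ = B.orthogonal ℓ := by
      apply Submodule.eq_of_le_of_finrank_eq
      · intro a ha
        exact fun n hn => horth ℓ hq n hn a ha
      · rw [LinearMap.BilinForm.finrank_orthogonal hBnd, hV, hdim]
    have hwℓ : w ∈ B.orthogonal ℓ := by
      intro n hn
      have := hPlw ▸ hle hn
      rw [LinearMap.mem_ker] at this
      show B n w = 0; rw [hBsymm]
      exact this
    exact hq w (hortho ▸ hwℓ)
  -- each intersection is a point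
  have hinter : ∀ (ℓ : Submodule F (Fin 4 → F)), Module.finrank F ℓ = 2 →
      (∀ v ∈ ℓ, B v v = 0) → Module.finrank F (Pl ⊓ ℓ : Submodule F (Fin 4 → F)) = 1 := by
    intro ℓ hdim hq
    have hle2 : Module.finrank F (Pl ⊓ ℓ : Submodule F (Fin 4 → F)) ≤ 2 := by
      have := Submodule.finrank_mono (inf_le_right : Pl ⊓ ℓ ≤ ℓ)
      omega
    have hge1 : 1 ≤ Module.finrank F (Pl ⊓ ℓ : Submodule F (Fin 4 → F)) := by
      have h5 := Submodule.finrank_sup_add_finrank_inf_eq Pl ℓ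
      have hsle : Module.finrank F (Pl ⊔ ℓ : Submodule F (Fin 4 → F)) ≤ 4 :=
        le_trans (Submodule.finrank_le _) (le_of_eq hV)
      rw [hPl, hdim] at h5
      omega
    rcases Nat.lt_or_ge (Module.finrank F (Pl ⊓ ℓ : Submodule F (Fin 4 → F))) 2 with h | h
    · omega
    · exfalso
      apply hnotle ℓ hdim hq
      have : (Pl ⊓ ℓ : Submodule F (Fin 4 → F)) = ℓ :=
        Submodule.eq_of_le_of_finrank_eq inf_le_right (by omega)
      rw [← this]; exact inf_le_left
  -- pick points pᵢ spanning the intersections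
  have hpt : ∀ (N : Submodule F (Fin 4 → F)), Module.finrank F N = 1 →
      ∃ p, p ≠ 0 ∧ N = Submodule.span F {p} := by
    intro N hN
    obtain ⟨p, hp, hp0⟩ : ∃ p ∈ N, p ≠ 0 := by
      apply exists_mem_ne_zero_of_rank_pos
      rw [← finrank_eq_rank, hN]; norm_num
    refine ⟨p, hp0, (Submodule.eq_of_le_of_finrank_eq ?_ ?_).symm⟩
    · rw [Submodule.span_le, Set.singleton_subset_iff]; exact hp
    · rw [finrank_span_singleton hp0, hN]
  obtain ⟨p₁, hp₁0, hsp₁⟩ := hpt _ (hinter ℓ₁ h₁ hq₁)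
  obtain ⟨p₂, hp₂0, hsp₂⟩ := hpt _ (hinter ℓ₂ h₂ hq₂)
  obtain ⟨p₃, hp₃0, hsp₃⟩ := hpt _ (hinter ℓ₃ h₃ hq₃)
  have hp₁m : p₁ ∈ Pl ⊓ ℓ₁ := hsp₁ ▸ Submodule.mem_span_singleton_self p₁
  have hp₂m : p₂ ∈ Pl ⊓ ℓ₂ := hsp₂ ▸ Submodule.mem_span_singleton_self p₂
  have hp₃m : p₃ ∈ Pl ⊓ ℓ₃ := hsp₃ ▸ Submodule.mem_span_singleton_self p₃
  -- the first two points span a line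
  have hd12b : Submodule.span F {p₁} ⊓ Submodule.span F {p₂} = ⊥ := by
    rw [eq_bot_iff, ← h12]
    apply inf_le_inf
    · rw [Submodule.span_le, Set.singleton_subset_iff]; exact hp₁m.2
    · rw [Submodule.span_le, Set.singleton_subset_iff]; exact hp₂m.2
  have hd12 : Module.finrank F
      (Submodule.span F {p₁} ⊔ Submodule.span F {p₂} : Submodule F (Fin 4 → F)) = 2 := by
    have h5 := Submodule.finrank_sup_add_finrank_inf_eq
      (Submodule.span F {p₁}) (Submodule.span F {p₂})
    rw [hd12b, finrank_bot, finrank_span_singleton hp₁0, finrank_span_singleton hp₂0] at h5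
    omega
  -- the third point is not on the line through the first two
  have hnotmem : p₃ ∉ (Submodule.span F {p₁} ⊔ Submodule.span F {p₂} :
      Submodule F (Fin 4 → F)) := by
    intro hmem
    obtain ⟨a, b, hab⟩ : ∃ a b : F, a • p₁ + b • p₂ = p₃ := by
      rw [← Submodule.mem_span_pair]
      have : Submodule.span F ({p₁, p₂} : Set (Fin 4 → F)) =
          Submodule.span F {p₁} ⊔ Submodule.span F {p₂} := by
        rw [Submodule.span_insert]
      rw [this]; exact hmem
    have ha : a ≠ 0 := by
      intro ha
      apply hp₃0
      have : p₃ ∈ ℓ₂ ⊓ ℓ₃ := ⟨by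
        rw [← hab, ha, zero_smul, zero_add]; exact Submodule.smul_mem _ _ hp₂m.2, hp₃m.2⟩
      rw [h23] at this; exact this
    have hb : b ≠ 0 := by
      intro hb
      apply hp₃0
      have : p₃ ∈ ℓ₁ ⊓ ℓ₃ := ⟨by
        rw [← hab, hb, zero_smul, add_zero]; exact Submodule.smul_mem _ _ hp₁m.2, hp₃m.2⟩
      rw [h13] at this; exact this
    have hB12 : B p₁ p₂ = 0 := by
      have h0 : B p₃ p₃ = 0 := hq₃ p₃ hp₃m.2
      rw [← hab] at h0
      have hexp : B (a • p₁ + b • p₂) (a • p₁ + b • p₂) =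
          a * a * B p₁ p₁ + b * b * B p₂ p₂ + 2 * (a * b) * B p₁ p₂ := by
        simp [map_add, map_smul, smul_eq_mul, hBsymm p₂ p₁]; ring
      rw [hexp, hq₁ p₁ hp₁m.2, hq₂ p₂ hp₂m.2] at h0
      simp only [mul_zero, zero_add] at h0
      rcases mul_eq_zero.mp h0 with h | h
      · rcases mul_eq_zero.mp h with h' | h'
        · exact absurd h' h2
        · exact absurd (mul_eq_zero.mp h') (by rintro (h'' | h'') <;> [exact ha h''; exact hb h''])
      · exact h
    -- the line p₁p₂ is totally isotropic and contained in Pl, so w lies on it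
    set m : Submodule F (Fin 4 → F) := Submodule.span F {p₁, p₂} with hm
    have hmsup : m = Submodule.span F {p₁} ⊔ Submodule.span F {p₂} := Submodule.span_insert _ _
    have hmrank : Module.finrank F m = 2 := by rw [hmsup]; exact hd12
    have hm0 : ∀ u ∈ m, ∀ v ∈ m, B u v = 0 := by
      intro u hu v hv
      obtain ⟨a, b, rfl⟩ := Submodule.mem_span_pair.mp (hm ▸ hu)
      obtain ⟨c, d, rfl⟩ := Submodule.mem_span_pair.mp (hm ▸ hv)
      simp [map_add, map_smul, smul_eq_mul, hq₁ p₁ hp₁m.2, hq₂ p₂ hp₂m.2, hB12,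
        hBsymm p₂ p₁]
    have hmorth : m = B.orthogonal m := by
      apply Submodule.eq_of_le_of_finrank_eq
      · intro x hx n hn
        exact hm0 n hn x hx
      · rw [LinearMap.BilinForm.finrank_orthogonal hBnd, hV, hmrank]
    have hwm : w ∈ m := by
      rw [hmorth]
      intro n hn
      obtain ⟨a, b, rfl⟩ := Submodule.mem_span_pair.mp (hm ▸ hn)
      have e1 : B w p₁ = 0 := by
        have := hp₁m.1; rw [hPlw] at this; exact this
      have e2 : B w p₂ = 0 := by
        have := hp₂m.1; rw [hPlw] at this; exact this
      simp [LinearMap.BilinForm.IsOrtho, map_add, map_smul, smul_eq_mul,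
        hBsymm p₁ w, hBsymm p₂ w, e1, e2]
    obtain ⟨x, y, hxy⟩ := Submodule.mem_span_pair.mp hwm
    apply hww
    rw [← hxy]
    have hexp : B (x • p₁ + y • p₂) (x • p₁ + y • p₂) =
        x * x * B p₁ p₁ + y * y * B p₂ p₂ + 2 * (x * y) * B p₁ p₂ := by
      simp [map_add, map_smul, smul_eq_mul, hBsymm p₂ p₁]; ring
    rw [hexp, hq₁ p₁ hp₁m.2, hq₂ p₂ hp₂m.2, hB12]; ring
  -- conclude
  have hd3b : (Submodule.span F {p₁} ⊔ Submodule.span F {p₂}) ⊓ Submodule.span F {p₃} = ⊥ := by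
    rw [eq_bot_iff]
    rintro x ⟨hx1, hx2⟩
    obtain ⟨c, rfl⟩ := Submodule.mem_span_singleton.mp hx2
    rcases eq_or_ne c 0 with rfl | hc
    · simp
    · exfalso
      apply hnotmem
      have := Submodule.smul_mem _ c⁻¹ hx1
      rwa [smul_smul, inv_mul_cancel₀ hc, one_smul] at this
  rw [hsp₁, hsp₂, hsp₃]
  have h5 := Submodule.finrank_sup_add_finrank_inf_eq
    (Submodule.span F {p₁} ⊔ Submodule.span F {p₂}) (Submodule.span F {p₃})
  rw [hd3b, finrank_bot, hd12, finrank_span_singleton hp₃0] at h5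
  omega
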